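/- arXiv:2011.12034 — 2 statements merged into one kernel-verified Lean document; each statement's English description precedes it below -/
import Mathlib

section
/- A circle map defined on a dense subset of S^1 with dense image that strictly preserves the circular (cyclic) order extends uniquely to an orientation-preserving homeomorphism of S^1. -/
open Set

noncomputable section

instance : Fact ((0:ℝ) < 1) := ⟨one_pos⟩

/-- The representative in `[0,1)` of a point of the circle `ℝ/ℤ`. -/
noncomputable def circleRep (x : AddCircle (1:ℝ)) : ℝ :=
  (AddCircle.equivIco 1 0 x).1

/-- `circleSbtw a b c` : going counterclockwise from `a`, one meets `b` strictly
before `c` (strict cyclic betweenness on the circle). -/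
def circleSbtw (a b c : AddCircle (1:ℝ)) : Prop :=
  0 < circleRep (b - a) ∧ circleRep (b - a) < circleRep (c - a)

namespace CircleExtAux

local notation "𝕊" => AddCircle (1:ℝ)

lemma rep_mem (x : 𝕊) : circleRep x ∈ Ico (0:ℝ) 1 := by
  have := (AddCircle.equivIco 1 0 x).2
  simpa [circleRep] using this

lemma rep_coe (x : 𝕊) : ((circleRep x : ℝ) : 𝕊) = x :=
  (AddCircle.equivIco 1 0).symm_apply_apply x

lemma rep_mk (t : ℝ) : circleRep (t : 𝕊) = Int.fract t := by
  have := AddCircle.coe_equivIco_mk_apply (1:ℝ) t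
  simpa [circleRep] using this

lemma rep_eq_zero_iff {x : 𝕊} : circleRep x = 0 ↔ x = 0 := by
  constructor
  · intro h
    have h2 := rep_coe x
    rw [h] at h2
    simpa using h2.symm
  · rintro rfl
    have h0 : ((0:ℝ) : 𝕊) = 0 := by norm_cast
    rw [← h0, rep_mk]
    simp

lemma fract_sub_of_le {α β : ℝ} (hα : 0 ≤ α) (hβ : β < 1) (h : α ≤ β) :
    Int.fract (β - α) = β - α :=
  Int.fract_eq_self.mpr ⟨by linarith, by linarith⟩

lemma fract_sub_of_lt {α β : ℝ} (hβ : 0 ≤ β) (hα : α < 1) (h : β < α) :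
    Int.fract (β - α) = β - α + 1 := by
  have h1 : Int.fract (β - α) = Int.fract (β - α + (1:ℤ)) := (Int.fract_add_intCast _ 1).symm
  rw [h1]
  push_cast
  exact Int.fract_eq_self.mpr ⟨by linarith, by linarith⟩

lemma sbtw_coe_iff {α β γ : ℝ} (hα : α ∈ Ico (0:ℝ) 1) (hβ : β ∈ Ico (0:ℝ) 1)
    (hγ : γ ∈ Ico (0:ℝ) 1) :
    circleSbtw (α : 𝕊) (β : 𝕊) (γ : 𝕊) ↔
      (α < β ∧ β < γ) ∨ (β < γ ∧ γ < α) ∨ (γ < α ∧ α < β) := by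
  obtain ⟨hα0, hα1⟩ := hα
  obtain ⟨hβ0, hβ1⟩ := hβ
  obtain ⟨hγ0, hγ1⟩ := hγ
  have e1 : (β : 𝕊) - (α : 𝕊) = ((β - α : ℝ) : 𝕊) := by norm_cast
  have e2 : (γ : 𝕊) - (α : 𝕊) = ((γ - α : ℝ) : 𝕊) := by norm_cast
  rw [circleSbtw, e1, e2, rep_mk, rep_mk]
  constructor
  · rintro ⟨h1, h2⟩
    rcases lt_trichotomy α β with hab | hab | hab
    · rcases lt_trichotomy α γ with hac | hac | hac
      · rw [fract_sub_of_le hα0 hβ1 hab.le, fract_sub_of_le hα0 hγ1 hac.le] at h2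
        exact Or.inl ⟨hab, by linarith⟩
      · exfalso
        rw [← hac, sub_self, Int.fract_zero] at h2
        exact (Int.fract_nonneg _).not_gt h2
      · exact Or.inr (Or.inr ⟨hac, hab⟩)
    · exfalso
      rw [← hab, sub_self, Int.fract_zero] at h1
      exact lt_irrefl _ h1
    · rcases lt_trichotomy α γ with hac | hac | hac
      · exfalso
        rw [fract_sub_of_lt hβ0 hα1 hab, fract_sub_of_le hα0 hγ1 hac.le] at h2
        linarith
      · exfalso
        rw [← hac, sub_self, Int.fract_zero] at h2
        exact (Int.fract_nonneg _).not_gt h2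
      · rw [fract_sub_of_lt hβ0 hα1 hab, fract_sub_of_lt hγ0 hα1 hac] at h2
        exact Or.inr (Or.inl ⟨by linarith, hac⟩)
  · rintro (⟨h1, h2⟩ | ⟨h1, h2⟩ | ⟨h1, h2⟩)
    · rw [fract_sub_of_le hα0 hβ1 h1.le, fract_sub_of_le hα0 hγ1 (h1.trans h2).le]
      constructor <;> linarith
    · rw [fract_sub_of_lt hβ0 hα1 (h1.trans h2), fract_sub_of_lt hγ0 hα1 h2]
      constructor <;> linarith
    · rw [fract_sub_of_le hα0 hβ1 h2.le, fract_sub_of_lt hγ0 hα1 h1]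
      constructor <;> linarith

lemma circleSbtw_add_right {a b c t : 𝕊} :
    circleSbtw (a + t) (b + t) (c + t) ↔ circleSbtw a b c := by
  simp [circleSbtw, add_sub_add_right_eq_sub]

lemma exists_coe_mem {S : Set 𝕊} (hS : Dense S) {u v : ℝ} (huv : u < v) :
    ∃ t ∈ Ioo u v, (t : 𝕊) ∈ S := by
  have hop : IsOpen ((fun x : ℝ => (x : 𝕊)) '' Ioo u v) :=
    QuotientAddGroup.isOpenMap_coe _ isOpen_Ioo
  have hne : ((fun x : ℝ => (x : 𝕊)) '' Ioo u v).Nonempty :=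
    (nonempty_Ioo.mpr huv).image _
  obtain ⟨x, hxS, hxU⟩ := hS.exists_mem_open hop hne
  obtain ⟨t, ht, rfl⟩ := hxU
  exact ⟨t, ht, hxS⟩

lemma exists_homeo_aux (D : Set 𝕊) (hD : Dense D) (ψ : 𝕊 → 𝕊)
    (him : Dense (ψ '' D))
    (hord : ∀ a ∈ D, ∀ b ∈ D, ∀ c ∈ D, circleSbtw a b c → circleSbtw (ψ a) (ψ b) (ψ c))
    (h0 : (0:𝕊) ∈ D) (hψ0 : ψ 0 = 0) :
    ∃ Ψ : 𝕊 ≃ₜ 𝕊, (∀ x ∈ D, Ψ x = ψ x) ∧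
      (∀ a b c, circleSbtw a b c → circleSbtw (Ψ a) (Ψ b) (Ψ c)) := by
  classical
  set D' : Set ℝ := {t | t ∈ Ioo (0:ℝ) 1 ∧ (t : 𝕊) ∈ D} with hD'def
  set g : ℝ → ℝ := fun t => circleRep (ψ (t : 𝕊)) with hgdef
  have hcast0 : ((0:ℝ) : 𝕊) = 0 := by norm_cast
  have hD'dense : ∀ u v : ℝ, 0 ≤ u → v ≤ 1 → u < v → ∃ t, t ∈ D' ∧ t ∈ Ioo u v := by
    intro u v hu hv huv
    obtain ⟨t, htuv, htD⟩ := exists_coe_mem hD huv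
    exact ⟨t, ⟨⟨lt_of_le_of_lt hu htuv.1, lt_of_lt_of_le htuv.2 hv⟩, htD⟩, htuv⟩
  have hsbtw01 : ∀ s t : ℝ, 0 < s → s < t → t < 1 → circleSbtw 0 (s : 𝕊) (t : 𝕊) := by
    intro s t hs hst ht1
    rw [show (0:𝕊) = ((0:ℝ) : 𝕊) from hcast0.symm]
    exact (sbtw_coe_iff ⟨le_refl 0, one_pos⟩ ⟨by linarith, by linarith⟩
      ⟨by linarith, ht1⟩).mpr (Or.inl ⟨hs, hst⟩)
  have hg1 : ∀ t ∈ D', g t < 1 := fun t _ => (rep_mem _).2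
  have hkey : ∀ s ∈ D', ∀ t ∈ D', s < t → 0 < g s ∧ g s < g t := by
    intro s hs t ht hst
    have hsb : circleSbtw 0 (s : 𝕊) (t : 𝕊) := hsbtw01 s t hs.1.1 hst ht.1.2
    have h := hord 0 h0 _ hs.2 _ ht.2 hsb
    rw [hψ0] at h
    obtain ⟨h1, h2⟩ := h
    simp only [sub_zero] at h1 h2
    exact ⟨h1, h2⟩
  have hgmono : ∀ s ∈ D', ∀ t ∈ D', s < t → g s < g t :=
    fun s hs t ht hst => (hkey s hs t ht hst).2
  have hg0 : ∀ s ∈ D', 0 < g s := by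
    intro s hs
    obtain ⟨t, ht, hts⟩ := hD'dense s 1 hs.1.1.le le_rfl hs.1.2
    exact (hkey s hs t ht hts.1).1
  have himg : ∀ u v : ℝ, 0 ≤ u → v ≤ 1 → u < v → ∃ t, t ∈ D' ∧ g t ∈ Ioo u v := by
    intro u v hu hv huv
    obtain ⟨w, hw, hwim⟩ := exists_coe_mem him huv
    obtain ⟨a, haD, haw⟩ := hwim
    have hw0 : 0 < w := lt_of_le_of_lt hu hw.1
    have hw1 : w < 1 := lt_of_lt_of_le hw.2 hv
    have hrepw : circleRep ((w : ℝ) : 𝕊) = w := by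
      rw [rep_mk]; exact Int.fract_eq_self.mpr ⟨hw0.le, hw1⟩
    have hane : a ≠ 0 := by
      intro h
      rw [h, hψ0] at haw
      have h2 : circleRep ((w : ℝ) : 𝕊) = 0 := by rw [← haw]; exact rep_eq_zero_iff.mpr rfl
      rw [hrepw] at h2; linarith
    have hrep0 : circleRep a ≠ 0 := fun h => hane (rep_eq_zero_iff.mp h)
    have hrepa : circleRep a ∈ D' := by
      refine ⟨⟨lt_of_le_of_ne (rep_mem a).1 (Ne.symm hrep0), (rep_mem a).2⟩, ?_⟩
      rw [rep_coe]; exact haD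
    refine ⟨circleRep a, hrepa, ?_⟩
    have hval : g (circleRep a) = w := by
      show circleRep (ψ ((circleRep a : ℝ) : 𝕊)) = w
      rw [rep_coe, haw, hrepw]
    rw [hval]; exact hw
  -- the monotone extension on [0,1]
  set F₀ : ℝ → ℝ := fun x => sSup (insert 0 (g '' (D' ∩ Iic x))) with hF₀def
  have hbdd : ∀ x : ℝ, BddAbove (insert 0 (g '' (D' ∩ Iic x))) := by
    intro x
    refine ⟨1, ?_⟩
    intro y hy
    rcases mem_insert_iff.mp hy with rfl | ⟨t, ⟨ht, _⟩, rfl⟩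
    · norm_num
    · exact (hg1 t ht).le
  have hne : ∀ x : ℝ, (insert 0 (g '' (D' ∩ Iic x))).Nonempty := fun x => ⟨0, mem_insert _ _⟩
  have hF₀nn : ∀ x, 0 ≤ F₀ x := fun x => le_csSup (hbdd x) (mem_insert _ _)
  have hF₀le1 : ∀ x, F₀ x ≤ 1 := by
    intro x
    refine csSup_le (hne x) ?_
    intro y hy
    rcases mem_insert_iff.mp hy with rfl | ⟨t, ⟨ht, _⟩, rfl⟩
    · norm_num
    · exact (hg1 t ht).le
  have hF₀mono : Monotone F₀ := by
    intro x y hxy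
    refine csSup_le_csSup (hbdd y) (hne x) ?_
    intro z hz
    rcases mem_insert_iff.mp hz with rfl | ⟨t, ⟨ht, ht2⟩, rfl⟩
    · exact mem_insert _ _
    · exact mem_insert_of_mem _ ⟨t, ⟨ht, le_trans ht2 hxy⟩, rfl⟩
  have hF₀zero : F₀ 0 = 0 := by
    have hempty : D' ∩ Iic (0:ℝ) = ∅ := by
      ext t
      simp only [mem_inter_iff, mem_Iic, mem_empty_iff_false, iff_false, not_and]
      intro ht
      exact not_le.mpr ht.1.1
    show sSup (insert 0 (g '' (D' ∩ Iic (0:ℝ)))) = 0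
    rw [hempty]
    simp
  have hF₀one : F₀ 1 = 1 := by
    refine le_antisymm (hF₀le1 1) ?_
    by_contra hcon
    push_neg at hcon
    obtain ⟨t, ht, hgt⟩ := himg (F₀ 1) 1 (hF₀nn 1) le_rfl hcon
    have hle : g t ≤ F₀ 1 :=
      le_csSup (hbdd 1) (mem_insert_of_mem _ ⟨t, ⟨ht, mem_Iic.mpr ht.1.2.le⟩, rfl⟩)
    linarith [hgt.1]
  have hF₀val : ∀ t ∈ D', F₀ t = g t := by
    intro t ht
    refine le_antisymm ?_ (le_csSup (hbdd t) (mem_insert_of_mem _ ⟨t, ⟨ht, mem_Iic.mpr le_rfl⟩, rfl⟩))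
    refine csSup_le (hne t) ?_
    intro y hy
    rcases mem_insert_iff.mp hy with rfl | ⟨s, ⟨hs, hs2⟩, rfl⟩
    · exact (hg0 t ht).le
    · rcases eq_or_lt_of_le (mem_Iic.mp hs2) with rfl | hlt
      · exact le_rfl
      · exact (hgmono s hs t ht hlt).le
  have hF₀smono : ∀ x y : ℝ, 0 ≤ x → y ≤ 1 → x < y → F₀ x < F₀ y := by
    intro x y hx hy hxy
    obtain ⟨s, hs, hsxy⟩ := hD'dense x y hx hy hxy
    obtain ⟨t, ht, htsy⟩ := hD'dense s y (hx.trans hsxy.1.le) hy hsxy.2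
    have h1 : F₀ x ≤ g s := by
      refine csSup_le (hne x) ?_
      intro z hz
      rcases mem_insert_iff.mp hz with rfl | ⟨u, ⟨hu, hu2⟩, rfl⟩
      · exact (hg0 s hs).le
      · exact (hgmono u hu s hs (lt_of_le_of_lt (mem_Iic.mp hu2) hsxy.1)).le
    have h2 : g s < g t := hgmono s hs t ht htsy.1
    have h3 : g t ≤ F₀ y :=
      le_csSup (hbdd y) (mem_insert_of_mem _ ⟨t, ⟨ht, mem_Iic.mpr htsy.2.le⟩, rfl⟩)
    linarith
  -- the lifted map on ℝ
  set F : ℝ → ℝ := fun x => (⌊x⌋ : ℝ) + F₀ (Int.fract x) with hFdef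
  have hFmono : Monotone F := by
    intro x y hxy
    rcases eq_or_lt_of_le (Int.floor_mono hxy) with hf | hf
    · have hfr : Int.fract x ≤ Int.fract y := by
        have hx' : Int.fract x = x - (⌊x⌋:ℝ) := rfl
        have hy' : Int.fract y = y - (⌊y⌋:ℝ) := rfl
        rw [hx', hy', ← hf]
        linarith
      show (⌊x⌋:ℝ) + F₀ (Int.fract x) ≤ (⌊y⌋:ℝ) + F₀ (Int.fract y)
      rw [← hf]
      exact add_le_add_right (hF₀mono hfr) _
    · have h1 : F x ≤ (⌊x⌋ : ℝ) + 1 := by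
        show (⌊x⌋:ℝ) + F₀ (Int.fract x) ≤ (⌊x⌋:ℝ) + 1
        exact add_le_add_right (hF₀le1 _) _
      have h2 : ((⌊x⌋ : ℝ) + 1) ≤ (⌊y⌋ : ℝ) := by exact_mod_cast Int.lt_iff_add_one_le.mp hf
      have h3 : (⌊y⌋:ℝ) ≤ F y := by
        show (⌊y⌋:ℝ) ≤ (⌊y⌋:ℝ) + F₀ (Int.fract y)
        linarith [hF₀nn (Int.fract y)]
      linarith
  have hFsmono : StrictMono F := by
    intro x y hxy
    rcases eq_or_lt_of_le (Int.floor_mono hxy.le) with hf | hf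
    · have hfr : Int.fract x < Int.fract y := by
        have hx' : Int.fract x = x - (⌊x⌋:ℝ) := rfl
        have hy' : Int.fract y = y - (⌊y⌋:ℝ) := rfl
        rw [hx', hy', ← hf]
        linarith
      have hlt := hF₀smono _ _ (Int.fract_nonneg x) (Int.fract_lt_one y).le hfr
      show (⌊x⌋:ℝ) + F₀ (Int.fract x) < (⌊y⌋:ℝ) + F₀ (Int.fract y)
      rw [← hf]
      linarith
    · have h1 : F x < (⌊x⌋ : ℝ) + 1 := by
        show (⌊x⌋:ℝ) + F₀ (Int.fract x) < (⌊x⌋:ℝ) + 1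
        have hlt : F₀ (Int.fract x) < F₀ 1 :=
          hF₀smono _ _ (Int.fract_nonneg x) le_rfl (Int.fract_lt_one x)
        rw [hF₀one] at hlt
        linarith
      have h2 : ((⌊x⌋ : ℝ) + 1) ≤ (⌊y⌋ : ℝ) := by exact_mod_cast Int.lt_iff_add_one_le.mp hf
      have h3 : (⌊y⌋:ℝ) ≤ F y := by
        show (⌊y⌋:ℝ) ≤ (⌊y⌋:ℝ) + F₀ (Int.fract y)
        linarith [hF₀nn (Int.fract y)]
      linarith
  have hFint : ∀ n : ℤ, F (n:ℝ) = n := by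
    intro n
    show (⌊(n:ℝ)⌋:ℝ) + F₀ (Int.fract (n:ℝ)) = n
    rw [Int.floor_intCast, Int.fract_intCast, hF₀zero, add_zero]
  have hFD' : ∀ t ∈ D', F t = g t := by
    intro t ht
    have h1 : ⌊t⌋ = 0 := Int.floor_eq_zero_iff.mpr ⟨ht.1.1.le, ht.1.2⟩
    have h2 : Int.fract t = t := Int.fract_eq_self.mpr ⟨ht.1.1.le, ht.1.2⟩
    show (⌊t⌋:ℝ) + F₀ (Int.fract t) = g t
    rw [h1, h2, hF₀val t ht]
    norm_num
  have hFshift : ∀ (n : ℤ) (t : ℝ), t ∈ Ico (0:ℝ) 1 → F (t + n) = n + F₀ t := by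
    intro n t ht
    show (⌊t + (n:ℝ)⌋ : ℝ) + F₀ (Int.fract (t + (n:ℝ))) = n + F₀ t
    rw [Int.floor_add_intCast, Int.fract_add_intCast, Int.floor_eq_zero_iff.mpr ht,
      Int.fract_eq_self.mpr ⟨ht.1, ht.2⟩]
    push_cast
    ring
  have hFrange : DenseRange F := by
    rw [denseRange_iff_closure_range, ← dense_iff_closure_eq] at *
    · rw [dense_iff_exists_between]
      intro u v huv
      by_cases hv : ((⌊u⌋ : ℝ) + 1) < v
      · refine ⟨F (((⌊u⌋ + 1 : ℤ)):ℝ), mem_range_self _, ?_, ?_⟩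
        · rw [hFint]
          push_cast
          exact lt_of_lt_of_le (Int.lt_floor_add_one u) le_rfl
        · rw [hFint]
          push_cast
          exact hv
      · push_neg at hv
        obtain ⟨t, ht, hgt⟩ := himg (u - ⌊u⌋) (v - ⌊u⌋)
          (by linarith [Int.floor_le u]) (by linarith) (by linarith)
        refine ⟨F (t + (⌊u⌋:ℝ)), mem_range_self _, ?_, ?_⟩
        · rw [hFshift ⌊u⌋ t ⟨ht.1.1.le, ht.1.2⟩, hF₀val t ht]
          linarith [hgt.1]
        · rw [hFshift ⌊u⌋ t ⟨ht.1.1.le, ht.1.2⟩, hF₀val t ht]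
          linarith [hgt.2]
  have hFcont : Continuous F := hFmono.continuous_of_denseRange hFrange
  have hFsurj : Function.Surjective F := by
    refine hFcont.surjective ?_ ?_
    · refine Filter.tendsto_atTop_atTop_of_monotone hFmono ?_
      intro b
      exact ⟨(⌈b⌉ : ℝ), by rw [hFint]; exact Int.le_ceil b⟩
    · refine Filter.tendsto_atBot_atBot_of_monotone hFmono ?_
      intro b
      exact ⟨(⌊b⌋ : ℝ), by rw [hFint]; exact Int.floor_le b⟩
  have hF0 : F 0 = 0 := by
    have h := hFint 0
    push_cast at h
    exact h
  have hF1 : F 1 = 1 := by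
    have h := hFint 1
    push_cast at h
    exact h
  have hF01 : ∀ x ∈ Ico (0:ℝ) 1, F x ∈ Ico (0:ℝ) 1 := by
    intro x hx
    constructor
    · rw [← hF0]; exact hFmono hx.1
    · rw [← hF1]; exact hFsmono hx.2
  -- the circle map
  set Ψf : 𝕊 → 𝕊 := AddCircle.liftIco 1 0 (fun x => ((F x : ℝ) : 𝕊)) with hΨfdef
  have hΨcoe : ∀ x ∈ Ico (0:ℝ) 1, Ψf ((x:ℝ) : 𝕊) = ((F x : ℝ) : 𝕊) := by
    intro x hx
    apply AddCircle.liftIco_coe_apply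
    simpa using hx
  have hΨrep : ∀ x : 𝕊, Ψf x = ((F (circleRep x) : ℝ) : 𝕊) := by
    intro x
    conv_lhs => rw [← rep_coe x]
    exact hΨcoe _ (rep_mem x)
  have hΨcont : Continuous Ψf := by
    apply AddCircle.liftIco_continuous
    · show ((F 0 : ℝ) : 𝕊) = ((F (0+1) : ℝ) : 𝕊)
      rw [hF0, zero_add, hF1, hcast0]
      exact (AddCircle.coe_period (1:ℝ)).symm
    · show ContinuousOn (fun x : ℝ => ((F x : ℝ) : 𝕊)) (Icc 0 (0+1))
      exact ((AddCircle.continuous_mk' 1).comp hFcont).continuousOn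
  have hΨinj : Function.Injective Ψf := by
    intro a b hab
    rw [hΨrep a, hΨrep b] at hab
    have h1 := hF01 _ (rep_mem a)
    have h2 := hF01 _ (rep_mem b)
    have heq : F (circleRep a) = F (circleRep b) := by
      rwa [AddCircle.coe_eq_coe_iff_of_mem_Ico (by rw [zero_add]; exact h1) (by rw [zero_add]; exact h2)] at hab
    have heq2 := hFsmono.injective heq
    rw [← rep_coe a, ← rep_coe b, heq2]
  have hΨsurj : Function.Surjective Ψf := by
    intro y
    obtain ⟨x, hx⟩ := hFsurj (circleRep y)
    have hx0 : 0 ≤ x := by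
      by_contra hcon
      push_neg at hcon
      have hlt := hFsmono hcon
      rw [hF0, hx] at hlt
      linarith [(rep_mem y).1]
    have hx1 : x < 1 := by
      by_contra hcon
      push_neg at hcon
      have hle := hFmono hcon
      rw [hF1, hx] at hle
      linarith [(rep_mem y).2]
    refine ⟨((x:ℝ) : 𝕊), ?_⟩
    rw [hΨcoe x ⟨hx0, hx1⟩, hx, rep_coe]
  have hΨbij : Function.Bijective Ψf := ⟨hΨinj, hΨsurj⟩
  have hΨecont : Continuous (Equiv.ofBijective Ψf hΨbij) := hΨcont
  refine ⟨hΨecont.homeoOfEquivCompactToT2, ?_, ?_⟩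
  · intro x hx
    show Ψf x = ψ x
    by_cases hx0 : x = 0
    · subst hx0
      rw [show (0:𝕊) = ((0:ℝ):𝕊) from hcast0.symm, hΨcoe 0 ⟨le_rfl, one_pos⟩, hF0, hcast0, hψ0]
    · have ht : circleRep x ∈ D' := by
        refine ⟨⟨?_, (rep_mem x).2⟩, by rw [rep_coe]; exact hx⟩
        refine lt_of_le_of_ne (rep_mem x).1 ?_
        intro h
        exact hx0 (rep_eq_zero_iff.mp h.symm)
      rw [hΨrep x, hFD' _ ht]
      show ((circleRep (ψ ((circleRep x : ℝ) : 𝕊)) : ℝ) : 𝕊) = ψ x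
      rw [rep_coe x]
      exact rep_coe (ψ x)
  · intro a b c h
    rw [← rep_coe a, ← rep_coe b, ← rep_coe c] at h
    have hcyc := (sbtw_coe_iff (rep_mem a) (rep_mem b) (rep_mem c)).mp h
    show circleSbtw (Ψf a) (Ψf b) (Ψf c)
    rw [hΨrep a, hΨrep b, hΨrep c]
    refine (sbtw_coe_iff (hF01 _ (rep_mem a)) (hF01 _ (rep_mem b)) (hF01 _ (rep_mem c))).mpr ?_
    rcases hcyc with ⟨h1, h2⟩ | ⟨h1, h2⟩ | ⟨h1, h2⟩
    · exact Or.inl ⟨hFsmono h1, hFsmono h2⟩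
    · exact Or.inr (Or.inl ⟨hFsmono h1, hFsmono h2⟩)
    · exact Or.inr (Or.inr ⟨hFsmono h1, hFsmono h2⟩)

end CircleExtAux

open CircleExtAux in
/-- A circle map defined on a dense subset of `S¹` with dense image that strictly
preserves the counterclockwise cyclic order extends uniquely to an
orientation-preserving homeomorphism of `S¹`. -/
theorem circle_map_extends_to_homeomorph
    (D : Set (AddCircle (1:ℝ))) (hD : Dense D)
    (ψ : AddCircle (1:ℝ) → AddCircle (1:ℝ))
    (him : Dense (ψ '' D))
    (hord : ∀ a ∈ D, ∀ b ∈ D, ∀ c ∈ D,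
      circleSbtw a b c → circleSbtw (ψ a) (ψ b) (ψ c)) :
    ∃! Ψ : AddCircle (1:ℝ) ≃ₜ AddCircle (1:ℝ),
      (∀ x ∈ D, Ψ x = ψ x) ∧
      (∀ a b c, circleSbtw a b c → circleSbtw (Ψ a) (Ψ b) (Ψ c)) := by
  classical
  obtain ⟨d0, hd0⟩ := hD.nonempty
  set D₁ : Set (AddCircle (1:ℝ)) := (fun x => x - d0) '' D with hD₁def
  set ψ₁ : AddCircle (1:ℝ) → AddCircle (1:ℝ) := fun x => ψ (x + d0) - ψ d0 with hψ₁def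
  have hmem₁ : ∀ x, x ∈ D₁ ↔ x + d0 ∈ D := by
    intro x
    constructor
    · rintro ⟨y, hy, rfl⟩
      simpa using hy
    · intro h
      exact ⟨x + d0, h, by simp⟩
  have hD₁ : Dense D₁ :=
    (Homeomorph.subRight d0).surjective.denseRange.dense_image
      (Homeomorph.continuous _) hD
  have himeq : ψ₁ '' D₁ = (fun y => y - ψ d0) '' (ψ '' D) := by
    ext z
    constructor
    · rintro ⟨x, hx, rfl⟩
      exact ⟨ψ (x + d0), ⟨x + d0, (hmem₁ x).mp hx, rfl⟩, rfl⟩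
    · rintro ⟨y, ⟨a, ha, rfl⟩, rfl⟩
      refine ⟨a - d0, (hmem₁ (a - d0)).mpr (by simpa using ha), ?_⟩
      show ψ (a - d0 + d0) - ψ d0 = ψ a - ψ d0
      rw [sub_add_cancel]
  have him₁ : Dense (ψ₁ '' D₁) := by
    rw [himeq]
    exact (Homeomorph.subRight (ψ d0)).surjective.denseRange.dense_image
      (Homeomorph.continuous _) him
  have hord₁ : ∀ a ∈ D₁, ∀ b ∈ D₁, ∀ c ∈ D₁,
      circleSbtw a b c → circleSbtw (ψ₁ a) (ψ₁ b) (ψ₁ c) := by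
    intro a ha b hb c hc h
    have h' : circleSbtw (a + d0) (b + d0) (c + d0) := circleSbtw_add_right.mpr h
    have h2 := hord _ ((hmem₁ a).mp ha) _ ((hmem₁ b).mp hb) _ ((hmem₁ c).mp hc) h'
    show circleSbtw (ψ (a + d0) - ψ d0) (ψ (b + d0) - ψ d0) (ψ (c + d0) - ψ d0)
    simp only [sub_eq_add_neg]
    exact circleSbtw_add_right.mpr h2
  have h0₁ : (0 : AddCircle (1:ℝ)) ∈ D₁ := (hmem₁ 0).mpr (by simpa using hd0)
  have hψ₁0 : ψ₁ 0 = 0 := by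
    show ψ (0 + d0) - ψ d0 = 0
    rw [zero_add, sub_self]
  obtain ⟨Ψ₁, hΨ₁agree, hΨ₁ord⟩ := exists_homeo_aux D₁ hD₁ ψ₁ him₁ hord₁ h0₁ hψ₁0
  set Ψ : AddCircle (1:ℝ) ≃ₜ AddCircle (1:ℝ) :=
    ((Homeomorph.subRight d0).trans Ψ₁).trans (Homeomorph.addRight (ψ d0)) with hΨdef
  have hΨapp : ∀ x, Ψ x = Ψ₁ (x - d0) + ψ d0 := fun x => rfl
  have hagree : ∀ x ∈ D, Ψ x = ψ x := by
    intro x hx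
    rw [hΨapp]
    have hx₁ : x - d0 ∈ D₁ := ⟨x, hx, rfl⟩
    rw [hΨ₁agree _ hx₁]
    show ψ (x - d0 + d0) - ψ d0 + ψ d0 = ψ x
    rw [sub_add_cancel, sub_add_cancel]
  have hordΨ : ∀ a b c, circleSbtw a b c → circleSbtw (Ψ a) (Ψ b) (Ψ c) := by
    intro a b c h
    rw [hΨapp, hΨapp, hΨapp]
    rw [circleSbtw_add_right]
    apply hΨ₁ord
    have : circleSbtw (a - d0 + d0) (b - d0 + d0) (c - d0 + d0) := by
      rw [sub_add_cancel, sub_add_cancel, sub_add_cancel]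
      exact h
    exact circleSbtw_add_right.mp this
  refine ⟨Ψ, ⟨hagree, hordΨ⟩, ?_⟩
  rintro Ψ' ⟨hag', -⟩
  have hfun : ⇑Ψ' = ⇑Ψ :=
    Continuous.ext_on hD Ψ'.continuous Ψ.continuous
      (fun x hx => by rw [hag' x hx, hagree x hx])
  exact Homeomorph.ext fun x => congrFun hfun x

end
end

section
/- For Lebesgue-almost every x ∈ (0,1), the average of the first N continued fraction coefficients of x tends to infinity as N → ∞: (a₁(x) + ⋯ + a_N(x))/N → ∞ almost surely. -/
open MeasureTheory Filter
open scoped ENNReal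

/-- The `(n+1)`-st continued fraction coefficient of `x`, obtained by iterating
the Gauss map `y ↦ frac(1/y)`; thus `cfCoeff 0 x = ⌊1/x⌋ = a₁(x)`. -/
noncomputable def cfCoeff (n : ℕ) (x : ℝ) : ℕ :=
  ⌊((fun y : ℝ => Int.fract y⁻¹)^[n] x)⁻¹⌋₊

namespace CFAux

open Set Real

/-- Partial sums of continued fraction coefficients. -/
noncomputable def S (N : ℕ) (x : ℝ) : ℝ := ∑ i ∈ Finset.range N, (cfCoeff i x : ℝ)

/-- The integrand `e^{-t S_N(x)} / (1+x)`. -/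
noncomputable def Gf (t : ℝ) (N : ℕ) (x : ℝ) : ℝ :=
  Real.exp (-(t * S N x)) * (1 + x)⁻¹

/-- The exponential moment `∫_{(0,1)} e^{-t S_N} /(1+x) dx`. -/
noncomputable def M (t : ℝ) (N : ℕ) : ℝ≥0∞ :=
  ∫⁻ x in Set.Ioo (0 : ℝ) 1, ENNReal.ofReal (Gf t N x)

/-- The spectral gap quantity. -/
noncomputable def del (t : ℝ) : ℝ :=
  ∑' k : ℕ, (1 - Real.exp (-(t * ((k : ℝ) + 1)))) * (((k : ℝ) + 2) * ((k : ℝ) + 3))⁻¹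

lemma cfCoeff_succ (n : ℕ) (x : ℝ) :
    cfCoeff (n + 1) x = cfCoeff n (Int.fract x⁻¹) := by
  simp only [cfCoeff, Function.iterate_succ_apply]

lemma measurable_cfCoeff (n : ℕ) : Measurable fun x : ℝ => cfCoeff n x := by
  have hT : Measurable fun y : ℝ => Int.fract y⁻¹ := measurable_fract.comp measurable_inv
  exact (Measurable.inv (hT.iterate n)).nat_floor

lemma measurable_S (N : ℕ) : Measurable (S N) := by
  unfold S
  exact Finset.measurable_sum _ fun i _ =>
    (measurable_from_top (f := (Nat.cast : ℕ → ℝ))).comp (measurable_cfCoeff i)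

lemma measurable_Gf (t : ℝ) (N : ℕ) : Measurable (Gf t N) := by
  unfold Gf
  exact (Real.measurable_exp.comp ((measurable_S N).const_mul t).neg).mul
    ((measurable_const.add measurable_id).inv)

lemma S_nonneg (N : ℕ) (x : ℝ) : 0 ≤ S N x :=
  Finset.sum_nonneg fun i _ => Nat.cast_nonneg _

/-- For `y ∈ (0,1)`, `x = (k+1+y)⁻¹` has first digit `k+1` and Gauss image `y`. -/
lemma S_comp (k N : ℕ) {y : ℝ} (hy : y ∈ Set.Ioo (0 : ℝ) 1) :
    S (N + 1) (((k : ℝ) + 1 + y)⁻¹) = ((k : ℝ) + 1) + S N y := by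
  obtain ⟨h0, h1⟩ := hy
  have hxinv : ((((k : ℝ) + 1 + y)⁻¹)⁻¹ : ℝ) = (k : ℝ) + 1 + y := inv_inv _
  have hfract : Int.fract ((k : ℝ) + 1 + y) = y := by
    have h : ((k : ℝ) + 1 + y) = ((k + 1 : ℤ) : ℝ) + y := by push_cast; ring
    rw [h, Int.fract_intCast_add, Int.fract_eq_self.2 ⟨h0.le, h1⟩]
  have hcoeff0 : cfCoeff 0 (((k : ℝ) + 1 + y)⁻¹) = k + 1 := by
    have : cfCoeff 0 (((k : ℝ) + 1 + y)⁻¹) = ⌊(k : ℝ) + 1 + y⌋₊ := by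
      simp only [cfCoeff, Function.iterate_zero, id_eq, hxinv]
    rw [this, Nat.floor_eq_iff (by positivity)]
    constructor
    · push_cast; linarith
    · push_cast; linarith
  have hcoeffs : ∀ i, cfCoeff (i + 1) (((k : ℝ) + 1 + y)⁻¹) = cfCoeff i y := by
    intro i
    rw [cfCoeff_succ, hxinv, hfract]
  unfold S
  rw [Finset.sum_range_succ']
  simp only [hcoeffs, hcoeff0]
  push_cast
  ring

lemma image_lemma (k : ℕ) :
    (fun y : ℝ => ((k : ℝ) + 1 + y)⁻¹) '' Set.Ioo 0 1
      = Set.Ioo ((k : ℝ) + 2)⁻¹ ((k : ℝ) + 1)⁻¹ := by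
  ext x
  constructor
  · rintro ⟨y, ⟨h0, h1⟩, rfl⟩
    constructor
    · exact inv_strictAnti₀ (by positivity) (by linarith)
    · exact inv_strictAnti₀ (by positivity) (by linarith)
  · rintro ⟨hl, hr⟩
    have hx0 : 0 < x := lt_trans (by positivity) hl
    have h1 : (k : ℝ) + 1 < x⁻¹ := by
      have := inv_strictAnti₀ hx0 hr
      rwa [inv_inv] at this
    have h2 : x⁻¹ < (k : ℝ) + 2 := by
      have := inv_strictAnti₀ (by positivity : (0:ℝ) < ((k : ℝ) + 2)⁻¹) hl
      rwa [inv_inv] at this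
    refine ⟨x⁻¹ - ((k : ℝ) + 1), ⟨by linarith, by linarith⟩, ?_⟩
    show ((k : ℝ) + 1 + (x⁻¹ - ((k : ℝ) + 1)))⁻¹ = x
    have h : (k : ℝ) + 1 + (x⁻¹ - ((k : ℝ) + 1)) = x⁻¹ := by ring
    rw [h, inv_inv]

/-- 1-D change of variables for the Lebesgue integral. -/
lemma lintegral_image_1d {s : Set ℝ} {f f' : ℝ → ℝ} (hs : MeasurableSet s)
    (hf' : ∀ x ∈ s, HasDerivWithinAt f (f' x) s x) (hf : Set.InjOn f s) (g : ℝ → ℝ≥0∞) :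
    ∫⁻ x in f '' s, g x = ∫⁻ x in s, ENNReal.ofReal |f' x| * g (f x) := by
  simpa only [ContinuousLinearMap.det_toSpanSingleton] using
    lintegral_image_eq_lintegral_abs_det_fderiv_mul volume hs
      (fun x hx => (hf' x hx).hasFDerivWithinAt) hf g

lemma step_k (t : ℝ) (N k : ℕ) :
    (∫⁻ x in Set.Ioo ((k : ℝ) + 2)⁻¹ ((k : ℝ) + 1)⁻¹, ENNReal.ofReal (Gf t (N + 1) x))
      = ∫⁻ y in Set.Ioo (0 : ℝ) 1,
          ENNReal.ofReal (Real.exp (-(t * ((k : ℝ) + 1))) *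
            (Real.exp (-(t * S N y)) * (((k : ℝ) + 1 + y) * ((k : ℝ) + 2 + y))⁻¹)) := by
  have hderiv : ∀ y ∈ Set.Ioo (0 : ℝ) 1,
      HasDerivWithinAt (fun y : ℝ => ((k : ℝ) + 1 + y)⁻¹)
        (-1 / ((k : ℝ) + 1 + y) ^ 2) (Set.Ioo 0 1) y := by
    intro y hy
    have hpos : (0 : ℝ) < (k : ℝ) + 1 + y := by
      have := hy.1; positivity
    have h1 : HasDerivAt (fun y : ℝ => (k : ℝ) + 1 + y) 1 y := (hasDerivAt_id y).const_add _
    have := h1.inv (ne_of_gt hpos)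
    exact this.hasDerivWithinAt
  have hinj : Set.InjOn (fun y : ℝ => ((k : ℝ) + 1 + y)⁻¹) (Set.Ioo 0 1) := by
    intro a ha b hb h
    simp only [inv_inj] at h
    linarith
  rw [← image_lemma k, lintegral_image_1d measurableSet_Ioo hderiv hinj]
  apply setLIntegral_congr_fun measurableSet_Ioo
  intro y hy
  beta_reduce
  have h0 := hy.1
  have hpos : (0 : ℝ) < (k : ℝ) + 1 + y := by positivity
  have hpos1 : (0 : ℝ) < (k : ℝ) + 2 + y := by positivity
  rw [← ENNReal.ofReal_mul (abs_nonneg _)]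
  congr 1
  have habs : |(-1 : ℝ) / ((k : ℝ) + 1 + y) ^ 2| = (((k : ℝ) + 1 + y) ^ 2)⁻¹ := by
    rw [abs_div, abs_neg, abs_one, abs_of_nonneg (sq_nonneg _), one_div]
  rw [habs]
  have hGf : Gf t (N + 1) (((k : ℝ) + 1 + y)⁻¹)
      = Real.exp (-(t * (((k : ℝ) + 1) + S N y))) * (1 + ((k : ℝ) + 1 + y)⁻¹)⁻¹ := by
    unfold Gf
    rw [S_comp k N hy]
  rw [hGf]
  have hexp : Real.exp (-(t * (((k : ℝ) + 1) + S N y)))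
      = Real.exp (-(t * ((k : ℝ) + 1))) * Real.exp (-(t * S N y)) := by
    rw [← Real.exp_add]; ring_nf
  rw [hexp]
  have hden : (1 + ((k : ℝ) + 1 + y)⁻¹)⁻¹ = ((k : ℝ) + 1 + y) * ((k : ℝ) + 2 + y)⁻¹ := by
    rw [inv_eq_iff_eq_inv]
    field_simp
    ring
  rw [hden]
  field_simp

lemma pairwise_disjoint_intervals :
    Pairwise (Function.onFun Disjoint
      (fun k : ℕ => Set.Ioo ((k : ℝ) + 2)⁻¹ ((k : ℝ) + 1)⁻¹)) := by
  have key : ∀ i j : ℕ, i < j →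
      Disjoint (Set.Ioo ((i : ℝ) + 2)⁻¹ ((i : ℝ) + 1)⁻¹)
        (Set.Ioo ((j : ℝ) + 2)⁻¹ ((j : ℝ) + 1)⁻¹) := by
    intro i j hij
    rw [Set.Ioo_disjoint_Ioo]
    have hle : ((j : ℝ) + 1)⁻¹ ≤ ((i : ℝ) + 2)⁻¹ := by
      apply inv_anti₀ (by positivity)
      have : (i : ℝ) + 1 ≤ (j : ℝ) := by exact_mod_cast hij
      linarith
    calc min ((i : ℝ) + 1)⁻¹ ((j : ℝ) + 1)⁻¹ ≤ ((j : ℝ) + 1)⁻¹ := min_le_right _ _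
      _ ≤ ((i : ℝ) + 2)⁻¹ := hle
      _ ≤ max ((i : ℝ) + 2)⁻¹ ((j : ℝ) + 2)⁻¹ := le_max_left _ _
  intro i j hij
  rcases hij.lt_or_gt with h | h
  · exact key i j h
  · exact (key j i h).symm

lemma ae_eq_union :
    (Set.Ioo (0 : ℝ) 1 : Set ℝ)
      =ᵐ[volume] ⋃ k : ℕ, Set.Ioo ((k : ℝ) + 2)⁻¹ ((k : ℝ) + 1)⁻¹ := by
  rw [ae_eq_set]
  constructor
  · refine measure_mono_null ?_
      ((Set.countable_range fun n : ℕ => ((n : ℝ))⁻¹).measure_zero _)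
    rintro x ⟨⟨hx0, hx1⟩, hxU⟩
    set n := ⌊x⁻¹⌋₊ with hn
    have hxinv1 : 1 < x⁻¹ := (one_lt_inv₀ hx0).2 hx1
    have hn1 : 1 ≤ n := Nat.le_floor (by exact_mod_cast hxinv1.le)
    have hfl : (n : ℝ) ≤ x⁻¹ := Nat.floor_le (by positivity)
    have hflu : x⁻¹ < (n : ℝ) + 1 := by
      have := Nat.lt_floor_add_one x⁻¹
      exact_mod_cast this
    by_cases hxeq : x⁻¹ = (n : ℝ)
    · refine ⟨n, ?_⟩
      show ((n : ℝ))⁻¹ = x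
      rw [← hxeq, inv_inv]
    · exfalso
      apply hxU
      have hlt : (n : ℝ) < x⁻¹ := lt_of_le_of_ne hfl (Ne.symm hxeq)
      refine Set.mem_iUnion.2 ⟨n - 1, ?_⟩
      have hcast : ((n - 1 : ℕ) : ℝ) = (n : ℝ) - 1 := by
        have : 1 ≤ n := hn1
        push_cast [this]
        ring
      constructor
      · rw [hcast]
        have h1 : (n : ℝ) - 1 + 2 = (n : ℝ) + 1 := by ring
        rw [h1]
        have hx0' : 0 < x := hx0
        have := inv_strictAnti₀ (by positivity : (0:ℝ) < x⁻¹) hflu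
        rwa [inv_inv] at this
      · rw [hcast]
        have h1 : (n : ℝ) - 1 + 1 = (n : ℝ) := by ring
        rw [h1]
        have := inv_strictAnti₀ (by positivity : (0:ℝ) < (n : ℝ)) hlt
        rwa [inv_inv] at this
  · have hsub : (⋃ k : ℕ, Set.Ioo ((k : ℝ) + 2)⁻¹ ((k : ℝ) + 1)⁻¹) ⊆ Set.Ioo (0 : ℝ) 1 := by
      rintro x ⟨s, ⟨k, rfl⟩, hx⟩
      simp only [Set.mem_Ioo] at hx ⊢
      constructor
      · exact lt_trans (by positivity) hx.1
      · calc x < ((k : ℝ) + 1)⁻¹ := hx.2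
          _ ≤ 1 := by
            rw [inv_le_one_iff₀]
            right
            have : (0:ℝ) ≤ (k : ℝ) := Nat.cast_nonneg k
            linarith
    rw [Set.diff_eq_empty.2 hsub]
    simp

lemma M_succ_eq (t : ℝ) (N : ℕ) :
    M t (N + 1) = ∑' k : ℕ, ∫⁻ y in Set.Ioo (0 : ℝ) 1,
        ENNReal.ofReal (Real.exp (-(t * ((k : ℝ) + 1))) *
          (Real.exp (-(t * S N y)) * (((k : ℝ) + 1 + y) * ((k : ℝ) + 2 + y))⁻¹)) := by
  calc M t (N + 1)
      = ∫⁻ x in ⋃ k : ℕ, Set.Ioo ((k : ℝ) + 2)⁻¹ ((k : ℝ) + 1)⁻¹,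
          ENNReal.ofReal (Gf t (N + 1) x) := by
        unfold M
        rw [Measure.restrict_congr_set ae_eq_union]
    _ = ∑' k : ℕ, ∫⁻ x in Set.Ioo ((k : ℝ) + 2)⁻¹ ((k : ℝ) + 1)⁻¹,
          ENNReal.ofReal (Gf t (N + 1) x) :=
        lintegral_iUnion (fun k => measurableSet_Ioo) pairwise_disjoint_intervals _
    _ = _ := tsum_congr fun k => step_k t N k

/-- Telescoping sum: `∑_k 1/((k+c)(k+c+1)) = 1/c`. -/
lemma hasSum_aux {c : ℝ} (hc : 0 < c) :
    HasSum (fun k : ℕ => (((k : ℝ) + c) * ((k : ℝ) + c + 1))⁻¹) c⁻¹ := by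
  have hpos : ∀ k : ℕ, (0 : ℝ) < (k : ℝ) + c := fun k => by positivity
  have hterm : ∀ k : ℕ, (((k : ℝ) + c) * ((k : ℝ) + c + 1))⁻¹
      = ((k : ℝ) + c)⁻¹ - ((k : ℝ) + c + 1)⁻¹ := by
    intro k
    have h1 := hpos k
    have h2 : (0 : ℝ) < (k : ℝ) + c + 1 := by linarith
    field_simp
    ring
  rw [hasSum_iff_tendsto_nat_of_nonneg (fun k => by positivity)]
  have hsum : ∀ n : ℕ, ∑ k ∈ Finset.range n, (((k : ℝ) + c) * ((k : ℝ) + c + 1))⁻¹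
      = c⁻¹ - ((n : ℝ) + c)⁻¹ := by
    intro n
    have : ∀ k ∈ Finset.range n, (((k : ℝ) + c) * ((k : ℝ) + c + 1))⁻¹
        = (fun i : ℕ => ((i : ℝ) + c)⁻¹) k - (fun i : ℕ => ((i : ℝ) + c)⁻¹) (k + 1) := by
      intro k _
      rw [hterm k]
      push_cast
      ring_nf
    rw [Finset.sum_congr rfl this, Finset.sum_range_sub']
    simp
  simp only [hsum]
  have h1 : Tendsto (fun n : ℕ => ((n : ℝ) + c)⁻¹) atTop (nhds 0) := by
    apply Filter.Tendsto.comp tendsto_inv_atTop_zero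
    exact tendsto_atTop_add_const_right atTop c tendsto_natCast_atTop_atTop
  have := tendsto_const_nhds (x := c⁻¹) (f := atTop (α := ℕ)) |>.sub h1
  simpa using this

lemma summable_g {y : ℝ} (hy : 0 < y) :
    Summable (fun k : ℕ => (((k : ℝ) + 1 + y) * ((k : ℝ) + 2 + y))⁻¹) := by
  have := hasSum_aux (c := 1 + y) (by linarith)
  apply Summable.congr this.summable
  intro k
  ring_nf

lemma hasSum_g {y : ℝ} (hy : 0 < y) :
    HasSum (fun k : ℕ => (((k : ℝ) + 1 + y) * ((k : ℝ) + 2 + y))⁻¹) (1 + y)⁻¹ := by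
  have := hasSum_aux (c := 1 + y) (by linarith)
  apply HasSum.congr_fun this
  intro k
  ring_nf

lemma summable_gk : Summable (fun k : ℕ => (((k : ℝ) + 2) * ((k : ℝ) + 3))⁻¹) := by
  have := hasSum_aux (c := 2) (by norm_num)
  apply Summable.congr this.summable
  intro k
  congr 2
  ring

lemma hasSum_gk : HasSum (fun k : ℕ => (((k : ℝ) + 2) * ((k : ℝ) + 3))⁻¹) 2⁻¹ := by
  have := hasSum_aux (c := 2) (by norm_num)
  apply HasSum.congr_fun this
  intro k
  congr 2
  ring

lemma exp_term_nonneg (t : ℝ) (k : ℕ) (ht : 0 ≤ t) :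
    0 ≤ 1 - Real.exp (-(t * ((k : ℝ) + 1))) := by
  have : Real.exp (-(t * ((k : ℝ) + 1))) ≤ 1 := by
    rw [Real.exp_le_one_iff]
    have : (0:ℝ) ≤ t * ((k : ℝ) + 1) := by positivity
    linarith
  linarith

lemma summable_del (t : ℝ) (ht : 0 ≤ t) :
    Summable (fun k : ℕ =>
      (1 - Real.exp (-(t * ((k : ℝ) + 1)))) * (((k : ℝ) + 2) * ((k : ℝ) + 3))⁻¹) := by
  apply Summable.of_nonneg_of_le
    (fun k => mul_nonneg (exp_term_nonneg t k ht) (by positivity))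
    (fun k => ?_) summable_gk
  have h1 : 1 - Real.exp (-(t * ((k : ℝ) + 1))) ≤ 1 := by
    have := Real.exp_pos (-(t * ((k : ℝ) + 1)))
    linarith
  calc (1 - Real.exp (-(t * ((k : ℝ) + 1)))) * (((k : ℝ) + 2) * ((k : ℝ) + 3))⁻¹
      ≤ 1 * (((k : ℝ) + 2) * ((k : ℝ) + 3))⁻¹ := by
        apply mul_le_mul_of_nonneg_right h1 (by positivity)
    _ = (((k : ℝ) + 2) * ((k : ℝ) + 3))⁻¹ := one_mul _

lemma del_nonneg (t : ℝ) (ht : 0 ≤ t) : 0 ≤ del t :=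
  tsum_nonneg fun k => mul_nonneg (exp_term_nonneg t k ht) (by positivity)

lemma del_le_one (t : ℝ) (ht : 0 ≤ t) : del t ≤ 1 := by
  have h1 : del t ≤ ∑' k : ℕ, (((k : ℝ) + 2) * ((k : ℝ) + 3))⁻¹ := by
    apply Summable.tsum_le_tsum _ (summable_del t ht) summable_gk
    intro k
    have h1 : 1 - Real.exp (-(t * ((k : ℝ) + 1))) ≤ 1 := by
      have := Real.exp_pos (-(t * ((k : ℝ) + 1)))
      linarith
    calc (1 - Real.exp (-(t * ((k : ℝ) + 1)))) * (((k : ℝ) + 2) * ((k : ℝ) + 3))⁻¹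
        ≤ 1 * (((k : ℝ) + 2) * ((k : ℝ) + 3))⁻¹ :=
          mul_le_mul_of_nonneg_right h1 (by positivity)
      _ = (((k : ℝ) + 2) * ((k : ℝ) + 3))⁻¹ := one_mul _
  rw [hasSum_gk.tsum_eq] at h1
  linarith

/-- The key pointwise bound on the transfer-operator sum. -/
lemma sum_bound {t y : ℝ} (ht : 0 ≤ t) (hy : y ∈ Set.Ioo (0 : ℝ) 1) :
    (∑' k : ℕ, Real.exp (-(t * ((k : ℝ) + 1))) *
        (((k : ℝ) + 1 + y) * ((k : ℝ) + 2 + y))⁻¹)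
      ≤ (1 - del t) * (1 + y)⁻¹ := by
  obtain ⟨hy0, hy1⟩ := hy
  set g : ℕ → ℝ := fun k => (((k : ℝ) + 1 + y) * ((k : ℝ) + 2 + y))⁻¹ with hg
  set e : ℕ → ℝ := fun k => Real.exp (-(t * ((k : ℝ) + 1))) with he
  have hgpos : ∀ k, 0 < g k := fun k => by positivity
  have hsum_g : Summable g := summable_g hy0
  have hsum_eg : Summable (fun k => e k * g k) := by
    apply Summable.of_nonneg_of_le (fun k => by positivity) (fun k => ?_) hsum_g
    calc e k * g k ≤ 1 * g k := by
          apply mul_le_mul_of_nonneg_right _ (hgpos k).le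
          rw [he, Real.exp_le_one_iff]
          have : (0:ℝ) ≤ t * ((k : ℝ) + 1) := by positivity
          linarith
      _ = g k := one_mul _
  have hsum_dg : Summable (fun k => (1 - e k) * g k) := by
    apply Summable.of_nonneg_of_le
      (fun k => mul_nonneg (exp_term_nonneg t k ht) (hgpos k).le) (fun k => ?_) hsum_g
    calc (1 - e k) * g k ≤ 1 * g k := by
          apply mul_le_mul_of_nonneg_right _ (hgpos k).le
          have := Real.exp_pos (-(t * ((k : ℝ) + 1)))
          simp only [he]
          linarith
      _ = g k := one_mul _
  have hsplit : (∑' k, e k * g k) = (∑' k, g k) - ∑' k, (1 - e k) * g k := by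
    rw [← Summable.tsum_sub hsum_g hsum_dg]
    exact tsum_congr fun k => by ring
  rw [hsplit, (hasSum_g hy0).tsum_eq]
  have hlow : del t * (1 + y)⁻¹ ≤ ∑' k, (1 - e k) * g k := by
    have : del t * (1 + y)⁻¹
        = ∑' k : ℕ, (1 - e k) * (((k : ℝ) + 2) * ((k : ℝ) + 3))⁻¹ * (1 + y)⁻¹ := by
      rw [del, ← tsum_mul_right]
    rw [this]
    apply Summable.tsum_le_tsum _ _ hsum_dg
    · intro k
      have hkey : (((k : ℝ) + 2) * ((k : ℝ) + 3))⁻¹ * (1 + y)⁻¹ ≤ g k := by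
        rw [← mul_inv]
        apply inv_anti₀ (by positivity)
        have hk0 : (0:ℝ) ≤ (k : ℝ) := Nat.cast_nonneg k
        nlinarith [mul_lt_mul_of_pos_left hy1 hy0, mul_nonneg hk0 hy0.le,
          mul_nonneg (mul_nonneg hk0 hk0) hy0.le]
      calc (1 - e k) * (((k : ℝ) + 2) * ((k : ℝ) + 3))⁻¹ * (1 + y)⁻¹
          = (1 - e k) * ((((k : ℝ) + 2) * ((k : ℝ) + 3))⁻¹ * (1 + y)⁻¹) := by ring
        _ ≤ (1 - e k) * g k :=
            mul_le_mul_of_nonneg_left hkey (exp_term_nonneg t k ht)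
    · apply Summable.mul_right
      exact summable_del t ht
  have : (1 - del t) * (1 + y)⁻¹ = (1 + y)⁻¹ - del t * (1 + y)⁻¹ := by ring
  rw [this]
  linarith

lemma M_zero_le (t : ℝ) : M t 0 ≤ 1 := by
  unfold M
  have hb : ∀ x ∈ Set.Ioo (0:ℝ) 1, ENNReal.ofReal (Gf t 0 x) ≤ 1 := by
    intro x hx
    unfold Gf S
    simp only [Finset.range_zero, Finset.sum_empty, mul_zero, neg_zero, Real.exp_zero, one_mul]
    rw [← ENNReal.ofReal_one]
    apply ENNReal.ofReal_le_ofReal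
    rw [inv_le_one_iff₀]
    right
    have := hx.1
    linarith
  calc (∫⁻ x in Set.Ioo (0:ℝ) 1, ENNReal.ofReal (Gf t 0 x))
      ≤ ∫⁻ _ in Set.Ioo (0:ℝ) 1, 1 := by
        apply lintegral_mono_ae
        rw [ae_restrict_iff' measurableSet_Ioo]
        exact ae_of_all _ hb
    _ = volume (Set.Ioo (0:ℝ) 1) := by
        rw [setLIntegral_const, one_mul]
    _ = 1 := by rw [Real.volume_Ioo]; norm_num

lemma M_succ_le (t : ℝ) (ht : 0 ≤ t) (N : ℕ) :
    M t (N + 1) ≤ ENNReal.ofReal (1 - del t) * M t N := by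
  rw [M_succ_eq t N]
  have hmeas : ∀ k : ℕ, Measurable (fun y : ℝ =>
      ENNReal.ofReal (Real.exp (-(t * ((k : ℝ) + 1))) *
        (Real.exp (-(t * S N y)) * (((k : ℝ) + 1 + y) * ((k : ℝ) + 2 + y))⁻¹))) := by
    intro k
    apply ENNReal.measurable_ofReal.comp
    apply Measurable.const_mul
    apply Measurable.mul
    · exact Real.measurable_exp.comp ((measurable_S N).const_mul t).neg
    · exact ((measurable_const.add measurable_id).mul (measurable_const.add measurable_id)).inv
  rw [← lintegral_tsum (fun k => (hmeas k).aemeasurable)]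
  have hpt : ∀ᵐ y ∂(volume.restrict (Set.Ioo (0:ℝ) 1)),
      (∑' k : ℕ, ENNReal.ofReal (Real.exp (-(t * ((k : ℝ) + 1))) *
        (Real.exp (-(t * S N y)) * (((k : ℝ) + 1 + y) * ((k : ℝ) + 2 + y))⁻¹)))
        ≤ ENNReal.ofReal (1 - del t) * ENNReal.ofReal (Gf t N y) := by
    rw [ae_restrict_iff' measurableSet_Ioo]
    apply ae_of_all
    intro y hy
    obtain ⟨hy0, hy1⟩ := hy
    have hterm : ∀ k : ℕ, Real.exp (-(t * ((k : ℝ) + 1))) *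
        (Real.exp (-(t * S N y)) * (((k : ℝ) + 1 + y) * ((k : ℝ) + 2 + y))⁻¹)
        = Real.exp (-(t * S N y)) *
          (Real.exp (-(t * ((k : ℝ) + 1))) * (((k : ℝ) + 1 + y) * ((k : ℝ) + 2 + y))⁻¹) := by
      intro k; ring
    have hsum_eg : Summable (fun k : ℕ => Real.exp (-(t * ((k : ℝ) + 1))) *
        (((k : ℝ) + 1 + y) * ((k : ℝ) + 2 + y))⁻¹) := by
      apply Summable.of_nonneg_of_le (fun k => by positivity) (fun k => ?_) (summable_g hy0)
      calc Real.exp (-(t * ((k : ℝ) + 1))) * (((k : ℝ) + 1 + y) * ((k : ℝ) + 2 + y))⁻¹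
          ≤ 1 * (((k : ℝ) + 1 + y) * ((k : ℝ) + 2 + y))⁻¹ := by
            apply mul_le_mul_of_nonneg_right _ (by positivity)
            rw [Real.exp_le_one_iff]
            have : (0:ℝ) ≤ t * ((k : ℝ) + 1) := by positivity
            linarith
        _ = (((k : ℝ) + 1 + y) * ((k : ℝ) + 2 + y))⁻¹ := one_mul _
    calc (∑' k : ℕ, ENNReal.ofReal (Real.exp (-(t * ((k : ℝ) + 1))) *
            (Real.exp (-(t * S N y)) * (((k : ℝ) + 1 + y) * ((k : ℝ) + 2 + y))⁻¹)))
        = ENNReal.ofReal (∑' k : ℕ, Real.exp (-(t * ((k : ℝ) + 1))) *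
            (Real.exp (-(t * S N y)) * (((k : ℝ) + 1 + y) * ((k : ℝ) + 2 + y))⁻¹)) := by
          rw [← ENNReal.ofReal_tsum_of_nonneg (fun k => by positivity)]
          apply Summable.congr (hsum_eg.mul_left (Real.exp (-(t * S N y))))
          intro k
          rw [hterm k]
      _ ≤ ENNReal.ofReal (Real.exp (-(t * S N y)) * ((1 - del t) * (1 + y)⁻¹)) := by
          apply ENNReal.ofReal_le_ofReal
          have heq : (∑' k : ℕ, Real.exp (-(t * ((k : ℝ) + 1))) *
              (Real.exp (-(t * S N y)) * (((k : ℝ) + 1 + y) * ((k : ℝ) + 2 + y))⁻¹))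
              = Real.exp (-(t * S N y)) * (∑' k : ℕ, Real.exp (-(t * ((k : ℝ) + 1))) *
                (((k : ℝ) + 1 + y) * ((k : ℝ) + 2 + y))⁻¹) := by
            rw [← tsum_mul_left]
            exact tsum_congr fun k => by ring
          rw [heq]
          apply mul_le_mul_of_nonneg_left (sum_bound ht ⟨hy0, hy1⟩) (Real.exp_pos _).le
      _ = ENNReal.ofReal (1 - del t) * ENNReal.ofReal (Gf t N y) := by
          rw [← ENNReal.ofReal_mul (by
            have h1 : del t ≤ 1 := del_le_one t ht
            linarith)]
          congr 1
          unfold Gf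
          ring
  calc (∫⁻ y in Set.Ioo (0:ℝ) 1, ∑' k : ℕ, ENNReal.ofReal (Real.exp (-(t * ((k : ℝ) + 1))) *
          (Real.exp (-(t * S N y)) * (((k : ℝ) + 1 + y) * ((k : ℝ) + 2 + y))⁻¹)))
      ≤ ∫⁻ y in Set.Ioo (0:ℝ) 1,
          ENNReal.ofReal (1 - del t) * ENNReal.ofReal (Gf t N y) := lintegral_mono_ae hpt
    _ = ENNReal.ofReal (1 - del t) * M t N := by
        rw [lintegral_const_mul' _ _ ENNReal.ofReal_ne_top]
        rfl

lemma M_le (t : ℝ) (ht : 0 ≤ t) (N : ℕ) :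
    M t N ≤ ENNReal.ofReal (1 - del t) ^ N := by
  induction N with
  | zero => simpa using M_zero_le t
  | succ n ih =>
      calc M t (n + 1) ≤ ENNReal.ofReal (1 - del t) * M t n := M_succ_le t ht n
        _ ≤ ENNReal.ofReal (1 - del t) * ENNReal.ofReal (1 - del t) ^ n :=
            mul_le_mul_right ih _
        _ = ENNReal.ofReal (1 - del t) ^ (n + 1) := by ring

/-- Markov/Chernoff bound for the bad sets. -/
lemma measure_bad_le (t C : ℝ) (ht : 0 ≤ t) (N : ℕ) :
    volume.restrict (Set.Ioo (0:ℝ) 1) {x | S N x ≤ C * N}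
      ≤ 2 * ENNReal.ofReal (Real.exp (t * C)) ^ N * M t N := by
  set B : Set ℝ := {x | S N x ≤ C * N} with hB
  have hBmeas : MeasurableSet B := measurableSet_le (measurable_S N) measurable_const
  have key : ∀ x ∈ Set.Ioo (0:ℝ) 1,
      B.indicator (fun _ => (1 : ℝ≥0∞)) x
        ≤ 2 * ENNReal.ofReal (Real.exp (t * C)) ^ N * ENNReal.ofReal (Gf t N x) := by
    intro x hx
    obtain ⟨hx0, hx1⟩ := hx
    rcases Set.indicator_eq_zero_or_self B (fun _ => (1:ℝ≥0∞)) x with h | h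
    · rw [h]; exact zero_le
    · rw [h]
      by_cases hxB : x ∈ B
      · have hS : S N x ≤ C * N := hxB
        have hreal : 1 ≤ 2 * (Real.exp (t * C) ^ N * Gf t N x) := by
          unfold Gf
          have h1 : Real.exp (t * C) ^ N * Real.exp (-(t * S N x))
              = Real.exp ((N : ℝ) * (t * C) - t * S N x) := by
            rw [← Real.exp_nat_mul, ← Real.exp_add]
            ring_nf
          have h2 : 1 ≤ Real.exp ((N : ℝ) * (t * C) - t * S N x) := by
            rw [Real.one_le_exp_iff]
            have h3 : t * S N x ≤ t * (C * N) := mul_le_mul_of_nonneg_left hS ht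
            nlinarith
          have h3 : (2:ℝ)⁻¹ ≤ (1 + x)⁻¹ := by
            apply inv_anti₀ (by linarith)
            linarith
          have h4 : (0:ℝ) < Real.exp (t * C) ^ N * Real.exp (-(t * S N x)) := by positivity
          calc (1:ℝ) = 2 * ((2:ℝ)⁻¹ * 1) := by norm_num
            _ ≤ 2 * ((1 + x)⁻¹ * (Real.exp (t * C) ^ N * Real.exp (-(t * S N x)))) := by
                apply mul_le_mul_of_nonneg_left _ (by norm_num)
                calc (2:ℝ)⁻¹ * 1 ≤ (1 + x)⁻¹ * 1 :=
                      mul_le_mul_of_nonneg_right h3 zero_le_one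
                  _ ≤ (1 + x)⁻¹ * (Real.exp (t * C) ^ N * Real.exp (-(t * S N x))) := by
                      apply mul_le_mul_of_nonneg_left _ (by positivity)
                      rw [h1]; exact h2
            _ = 2 * (Real.exp (t * C) ^ N * (Real.exp (-(t * S N x)) * (1 + x)⁻¹)) := by ring
        calc (1 : ℝ≥0∞) = ENNReal.ofReal 1 := ENNReal.ofReal_one.symm
          _ ≤ ENNReal.ofReal (2 * (Real.exp (t * C) ^ N * Gf t N x)) :=
              ENNReal.ofReal_le_ofReal hreal
          _ = ENNReal.ofReal 2 * (ENNReal.ofReal (Real.exp (t * C) ^ N)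
                * ENNReal.ofReal (Gf t N x)) := by
              rw [ENNReal.ofReal_mul (by norm_num), ENNReal.ofReal_mul (by positivity)]
          _ = 2 * ENNReal.ofReal (Real.exp (t * C)) ^ N * ENNReal.ofReal (Gf t N x) := by
              rw [ENNReal.ofReal_pow (Real.exp_pos _).le, ENNReal.ofReal_ofNat]
              ring
      · exfalso
        rw [Set.indicator_apply_eq_self] at h
        by_cases h1 : x ∈ B
        · exact hxB h1
        · exact one_ne_zero (h h1)
  calc volume.restrict (Set.Ioo (0:ℝ) 1) B
      = ∫⁻ x in Set.Ioo (0:ℝ) 1, B.indicator (fun _ => (1:ℝ≥0∞)) x :=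
        (lintegral_indicator_one hBmeas).symm
    _ ≤ ∫⁻ x in Set.Ioo (0:ℝ) 1,
          2 * ENNReal.ofReal (Real.exp (t * C)) ^ N * ENNReal.ofReal (Gf t N x) := by
        apply lintegral_mono_ae
        rw [ae_restrict_iff' measurableSet_Ioo]
        exact ae_of_all _ key
    _ = 2 * ENNReal.ofReal (Real.exp (t * C)) ^ N * M t N := by
        rw [lintegral_const_mul' _ _ (by
          apply ENNReal.mul_ne_top (by norm_num)
          exact ENNReal.pow_ne_top ENNReal.ofReal_ne_top)]
        rfl

/-- Choice of `t`: for any `C` there is `t > 0` with `t * C < del t`. -/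
lemma exists_t (C : ℝ) : ∃ t : ℝ, 0 < t ∧ t * C < del t := by
  obtain ⟨K, hK⟩ := (tendsto_sum_range_one_div_nat_succ_atTop.eventually_gt_atTop
    (18 * C + 1)).exists
  refine ⟨((K : ℝ) + 1)⁻¹, by positivity, ?_⟩
  set t : ℝ := ((K : ℝ) + 1)⁻¹ with htdef
  have ht0 : 0 < t := by positivity
  have ht1 : ∀ k : ℕ, k < K → t * ((k : ℝ) + 1) ≤ 1 := by
    intro k hk
    have hk' : (k : ℝ) + 1 ≤ (K : ℝ) + 1 := by
      have : (k : ℝ) ≤ (K : ℝ) := by exact_mod_cast hk.le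
      linarith
    calc t * ((k : ℝ) + 1) ≤ t * ((K : ℝ) + 1) := by
          apply mul_le_mul_of_nonneg_left hk' ht0.le
      _ = 1 := by
          rw [htdef]
          field_simp
  -- each term of `del` is at least `t / (18 (k+1))` for `k < K`
  have hterm : ∀ k : ℕ, k < K →
      t / 18 * (1 / ((k : ℝ) + 1))
        ≤ (1 - Real.exp (-(t * ((k : ℝ) + 1)))) * (((k : ℝ) + 2) * ((k : ℝ) + 3))⁻¹ := by
    intro k hk
    set u : ℝ := t * ((k : ℝ) + 1) with hu
    have hu0 : 0 < u := by positivity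
    have hu1 : u ≤ 1 := ht1 k hk
    -- 1 - exp(-u) ≥ u/2 for 0 ≤ u ≤ 1
    have hexp : u / 2 ≤ 1 - Real.exp (-u) := by
      have h1 : Real.exp (-u) ≤ (1 + u)⁻¹ := by
        rw [Real.exp_neg]
        apply inv_anti₀ (by linarith)
        linarith [Real.add_one_le_exp u]
      have h2 : (1 + u)⁻¹ ≤ 1 - u / 2 := by
        rw [inv_le_iff_one_le_mul₀ (by linarith)]
        nlinarith
      linarith
    have hk0 : (0:ℝ) ≤ (k : ℝ) := Nat.cast_nonneg k
    have hkey : t / 18 * (1 / ((k : ℝ) + 1)) ≤ u / 2 * (((k : ℝ) + 2) * ((k : ℝ) + 3))⁻¹ := by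
      rw [hu]
      have hA : (0:ℝ) < ((k : ℝ) + 2) * ((k : ℝ) + 3) := by positivity
      have hAle : ((k : ℝ) + 2) * ((k : ℝ) + 3) ≤ 9 * ((k : ℝ) + 1) ^ 2 := by nlinarith
      have h1 : (9 * ((k : ℝ) + 1) ^ 2)⁻¹ ≤ (((k : ℝ) + 2) * ((k : ℝ) + 3))⁻¹ :=
        inv_anti₀ hA hAle
      have hk1 : ((k : ℝ) + 1) ≠ 0 := by positivity
      have h2 : t / 18 * (1 / ((k : ℝ) + 1))
          = t * ((k : ℝ) + 1) / 2 * (9 * ((k : ℝ) + 1) ^ 2)⁻¹ := by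
        field_simp
        ring
      calc t / 18 * (1 / ((k : ℝ) + 1))
          = t * ((k : ℝ) + 1) / 2 * (9 * ((k : ℝ) + 1) ^ 2)⁻¹ := h2
        _ ≤ t * ((k : ℝ) + 1) / 2 * (((k : ℝ) + 2) * ((k : ℝ) + 3))⁻¹ :=
            mul_le_mul_of_nonneg_left h1 (by positivity)
    calc t / 18 * (1 / ((k : ℝ) + 1)) ≤ u / 2 * (((k : ℝ) + 2) * ((k : ℝ) + 3))⁻¹ := hkey
      _ ≤ (1 - Real.exp (-u)) * (((k : ℝ) + 2) * ((k : ℝ) + 3))⁻¹ :=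
          mul_le_mul_of_nonneg_right hexp (by positivity)
  have hsum : t / 18 * (18 * C + 1) < del t := by
    have h1 : t / 18 * (18 * C + 1) < t / 18 * (∑ i ∈ Finset.range K, (1 / ((i : ℝ) + 1))) := by
      apply mul_lt_mul_of_pos_left hK (by positivity)
    have h2 : t / 18 * (∑ i ∈ Finset.range K, (1 / ((i : ℝ) + 1)))
        ≤ ∑ k ∈ Finset.range K,
            (1 - Real.exp (-(t * ((k : ℝ) + 1)))) * (((k : ℝ) + 2) * ((k : ℝ) + 3))⁻¹ := by
      rw [Finset.mul_sum]
      apply Finset.sum_le_sum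
      intro k hk
      exact hterm k (Finset.mem_range.1 hk)
    have h3 : (∑ k ∈ Finset.range K,
        (1 - Real.exp (-(t * ((k : ℝ) + 1)))) * (((k : ℝ) + 2) * ((k : ℝ) + 3))⁻¹) ≤ del t := by
      apply Summable.sum_le_tsum _ _ (summable_del t ht0.le)
      intro k _
      exact mul_nonneg (exp_term_nonneg t k ht0.le) (by positivity)
    linarith
  calc t * C = t / 18 * (18 * C) := by ring
    _ < t / 18 * (18 * C + 1) := by
        apply mul_lt_mul_of_pos_left _ (by positivity)
        linarith
    _ < del t := hsum

end CFAux

/-- For Lebesgue-almost every `x ∈ (0,1)`, the average of the first `N`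
continued fraction coefficients of `x` tends to infinity as `N → ∞`. -/
theorem cf_coefficient_averages_tendsto_atTop :
    ∀ᵐ x ∂(volume.restrict (Set.Ioo (0:ℝ) 1)),
      Tendsto (fun N : ℕ => (∑ i ∈ Finset.range N, (cfCoeff i x : ℝ)) / N)
        atTop atTop := by
  set μ := volume.restrict (Set.Ioo (0:ℝ) 1) with hμ
  have key : ∀ C : ℕ, ∀ᵐ x ∂μ, ∀ᶠ N in atTop, ¬ (CFAux.S N x ≤ (C : ℝ) * N) := by
    intro C
    obtain ⟨t, ht0, htδ⟩ := CFAux.exists_t (C : ℝ)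
    set r : ℝ≥0∞ := ENNReal.ofReal (Real.exp (t * C) * (1 - CFAux.del t)) with hr_def
    have hδ1 : CFAux.del t ≤ 1 := CFAux.del_le_one t ht0.le
    have hr1 : r < 1 := by
      rw [hr_def, ENNReal.ofReal_lt_one]
      calc Real.exp (t * C) * (1 - CFAux.del t)
          ≤ Real.exp (t * C) * Real.exp (-(CFAux.del t)) := by
            apply mul_le_mul_of_nonneg_left _ (Real.exp_pos _).le
            linarith [Real.add_one_le_exp (-(CFAux.del t))]
        _ = Real.exp (t * C - CFAux.del t) := by rw [← Real.exp_add]; ring_nf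
        _ < 1 := by
            rw [Real.exp_lt_one_iff]
            linarith
    have hbound : ∀ N : ℕ, μ {x | CFAux.S N x ≤ (C : ℝ) * N} ≤ 2 * r ^ N := by
      intro N
      calc μ {x | CFAux.S N x ≤ (C : ℝ) * N}
          ≤ 2 * ENNReal.ofReal (Real.exp (t * C)) ^ N * CFAux.M t N :=
            CFAux.measure_bad_le t (C : ℝ) ht0.le N
        _ ≤ 2 * ENNReal.ofReal (Real.exp (t * C)) ^ N
              * ENNReal.ofReal (1 - CFAux.del t) ^ N := by
            apply mul_le_mul_right
            exact CFAux.M_le t ht0.le N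
        _ = 2 * r ^ N := by
            rw [hr_def, ENNReal.ofReal_mul (Real.exp_pos _).le, mul_pow]
            ring
    have hsum_fin : (∑' N : ℕ, μ {x | CFAux.S N x ≤ (C : ℝ) * N}) ≠ ⊤ := by
      apply ne_top_of_le_ne_top _ (ENNReal.tsum_le_tsum hbound)
      rw [ENNReal.tsum_mul_left, ENNReal.tsum_geometric]
      apply ENNReal.mul_ne_top (by norm_num)
      rw [ENNReal.inv_ne_top]
      intro h
      rw [tsub_eq_zero_iff_le] at h
      exact absurd h (not_le.2 hr1)
    have := MeasureTheory.ae_eventually_notMem hsum_fin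
    filter_upwards [this] with x hx
    filter_upwards [hx] with N hN
    exact hN
  rw [← ae_all_iff] at key
  filter_upwards [key] with x hx
  rw [tendsto_atTop]
  intro b
  have hC : b ≤ (⌈b⌉₊ : ℝ) := Nat.le_ceil b
  filter_upwards [hx ⌈b⌉₊, eventually_ge_atTop 1] with N hN hN1
  push_neg at hN
  have hN0 : (0:ℝ) < (N : ℝ) := by exact_mod_cast hN1
  have hS : (⌈b⌉₊ : ℝ) * N < CFAux.S N x := hN
  calc b ≤ (⌈b⌉₊ : ℝ) := hC
    _ ≤ (∑ i ∈ Finset.range N, (cfCoeff i x : ℝ)) / N := by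
        rw [le_div_iff₀ hN0]
        exact le_of_lt hS
end
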